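/- With the labeling λ of Π_{n,s+1}: if x ⋖ y is an edge with A(x) ≠ A(y) and λ(x ⋖ y) = (k,i,j), then the word entry satisfies w^i_k(x) > w^i_k(y) = j. -/

import Mathlib

open Finset

/-- A vector partition of `[n]` into `s+1` components: a partition `P` of `[n]`
together with `s` labelings of its parts. -/
structure VPart (n s : ℕ) where
  P : Finpartition (Finset.univ : Finset (Fin n))
  w : Fin s → Finset (Fin n) → Finset (Fin n)
  card_w : ∀ i : Fin s, ∀ B ∈ P.parts, (w i B).card = B.card
  part_w : ∀ i : Fin s, ∀ x : Fin n, ∃! B, B ∈ P.parts ∧ x ∈ w i B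
  w_junk : ∀ i B, B ∉ P.parts → w i B = ∅

namespace VPart

variable {n s : ℕ}

@[ext] theorem ext' {x y : VPart n s} (hP : x.P = y.P) (hw : x.w = y.w) : x = y := by
  cases x; cases y; simp_all

/-- componentwise union-refinement order -/
instance : PartialOrder (VPart n s) where
  le x y := x.P ≤ y.P ∧
    ∀ i : Fin s, ∀ B ∈ x.P.parts, ∀ B' ∈ y.P.parts, B ⊆ B' → x.w i B ⊆ y.w i B'
  le_refl x := by
    refine ⟨le_refl _, fun i B hB B' hB' hBB' => ?_⟩
    obtain rfl : B = B' := by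
      obtain ⟨a, ha⟩ := x.P.nonempty_of_mem_parts hB
      exact x.P.eq_of_mem_parts hB hB' ha (hBB' ha)
    exact subset_rfl
  le_trans x y z hxy hyz := by
    refine ⟨le_trans hxy.1 hyz.1, fun i B hB B'' hB'' hBB'' => ?_⟩
    obtain ⟨B', hB', hBB'⟩ := hxy.1 hB
    obtain ⟨B''', hB''', hB'B'''⟩ := hyz.1 hB'
    obtain ⟨a, ha⟩ := x.P.nonempty_of_mem_parts hB
    obtain rfl : B''' = B'' :=
      z.P.eq_of_mem_parts hB''' hB'' (hB'B''' (hBB' ha)) (hBB'' ha)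
    exact subset_trans (hxy.2 i B hB B' hB' hBB') (hyz.2 i B' hB' B''' hB''' hB'B''')
  le_antisymm x y hxy hyx := by
    have hP : x.P = y.P := le_antisymm hxy.1 hyx.1
    refine ext' hP ?_
    funext i B
    by_cases hB : B ∈ x.P.parts
    · exact subset_antisymm (hxy.2 i B hB B (hP ▸ hB) subset_rfl)
        (hyx.2 i B (hP ▸ hB) B hB subset_rfl)
    · rw [x.w_junk i B hB, y.w_junk i B (hP ▸ hB)]

/-- the part of the underlying partition containing `k` -/
def partOf (x : VPart n s) (k : Fin n) : Finset (Fin n) := x.P.part k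

/-- the atom word of `x`: `atomWord x i k` is the element of the `i`-th label of the
part containing `k` whose rank in that label matches the rank of `k` in its part. -/
def atomWord (x : VPart n s) (i : Fin s) (k : Fin n) : Fin n :=
  (((x.w i (x.partOf k)).sort (· ≤ ·)).getD (((x.partOf k).filter (· < k)).card)) k

/-- `x` is an atom: all parts of the underlying partition are singletons. -/
def IsAtomic (x : VPart n s) : Prop := ∀ B ∈ x.P.parts, B.card = 1

/-- strict lexicographic order on atom words, with `i` as the major index
and `k` the minor index. -/
def wordLt (A B : Fin s → Fin n → Fin n) : Prop :=
  ∃ i k, A i k < B i k ∧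
    ∀ i' k', (i' < i ∨ (i' = i ∧ k' < k)) → A i' k' = B i' k'

def wordLe (A B : Fin s → Fin n → Fin n) : Prop := wordLt A B ∨ A = B

end VPart


section Aux

variable {n : ℕ}

lemma sort_getD_mem {S : Finset (Fin n)} {m : ℕ} (hm : m < S.card) (d : Fin n) :
    (S.sort (· ≤ ·)).getD m d ∈ S := by
  have hl : m < (S.sort (· ≤ ·)).length := by rwa [Finset.length_sort]
  rw [List.getD_eq_get _ _ ⟨m, hl⟩]
  exact (Finset.mem_sort _).1 (List.get_mem _ ⟨m, hl⟩)

lemma sort_getD_inj {S : Finset (Fin n)} {m m' : ℕ} (hm : m < S.card) (hm' : m' < S.card)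
    (d : Fin n) (h : (S.sort (· ≤ ·)).getD m d = (S.sort (· ≤ ·)).getD m' d) : m = m' := by
  have hl : m < (S.sort (· ≤ ·)).length := by rwa [Finset.length_sort]
  have hl' : m' < (S.sort (· ≤ ·)).length := by rwa [Finset.length_sort]
  rw [List.getD_eq_get _ _ ⟨m, hl⟩, List.getD_eq_get _ _ ⟨m', hl'⟩] at h
  have := (List.Nodup.get_inj_iff (Finset.sort_nodup _ _)).1 h
  exact Fin.mk.inj_iff.1 this

lemma sort_getD_strictMono {S : Finset (Fin n)} {m m' : ℕ} (hm' : m' < S.card)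
    (h : m < m') (d : Fin n) :
    (S.sort (· ≤ ·)).getD m d < (S.sort (· ≤ ·)).getD m' d := by
  have hl' : m' < (S.sort (· ≤ ·)).length := by rwa [Finset.length_sort]
  have hl : m < (S.sort (· ≤ ·)).length := lt_trans h hl'
  rw [List.getD_eq_get _ _ ⟨m, hl⟩, List.getD_eq_get _ _ ⟨m', hl'⟩]
  exact (Finset.sortedLT_sort S).strictMono_get (by exact h)

lemma sort_getD_lt_iff {S : Finset (Fin n)} {k : Fin n} {m : ℕ} (hm : m < S.card) (d : Fin n) :
    (S.sort (· ≤ ·)).getD m d < k ↔ m < (S.filter (· < k)).card := by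
  constructor
  · intro h
    have : m + 1 ≤ (S.filter (· < k)).card := by
      have := Finset.card_le_card_of_injOn (fun j => (S.sort (· ≤ ·)).getD j d)
        (s := Finset.range (m + 1)) (t := S.filter (· < k)) ?_ ?_
      · simpa using this
      · intro j hj
        rw [Finset.mem_coe, Finset.mem_range] at hj
        have hjm : j ≤ m := Nat.lt_succ_iff.1 hj
        have hjc : j < S.card := lt_of_le_of_lt hjm hm
        refine Finset.mem_filter.2 ⟨sort_getD_mem hjc d, ?_⟩
        rcases lt_or_eq_of_le hjm with h' | h'
        · exact lt_trans (sort_getD_strictMono hm h' d) h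
        · subst h'; exact h
      · intro j hj j' hj' hjj'
        rw [Finset.coe_range, Set.mem_Iio] at hj hj'
        exact sort_getD_inj (lt_of_lt_of_le hj (Nat.succ_le_of_lt hm) |>.trans_le le_rfl)
          (lt_of_lt_of_le hj' (Nat.succ_le_of_lt hm) |>.trans_le le_rfl) d hjj'
    exact this
  · intro h
    by_contra hc
    push_neg at hc
    have : (S.filter (· < k)).card ≤ m := by
      have := Finset.card_le_card_of_injOn (fun a => (S.sort (· ≤ ·)).idxOf a)
        (s := S.filter (· < k)) (t := Finset.range m) ?_ ?_
      · simpa using this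
      · intro a ha
        rw [Finset.mem_coe, Finset.mem_filter] at ha
        have hmem : a ∈ S.sort (· ≤ ·) := (Finset.mem_sort _).2 ha.1
        have hidx : (S.sort (· ≤ ·)).idxOf a < (S.sort (· ≤ ·)).length :=
          List.idxOf_lt_length_iff.2 hmem
        rw [Finset.mem_coe, Finset.mem_range]
        by_contra hge
        push_neg at hge
        have hml : m < (S.sort (· ≤ ·)).length := by rwa [Finset.length_sort]
        have : (S.sort (· ≤ ·)).getD m d ≤ (S.sort (· ≤ ·)).get ⟨_, hidx⟩ := by
          rw [List.getD_eq_get _ _ ⟨m, hml⟩]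
          exact (Finset.pairwise_sort _ _).rel_get_of_le (by exact hge)
        rw [List.idxOf_get] at this
        exact absurd (lt_of_le_of_lt this ha.2) (not_lt.2 hc)
      · intro a ha a' ha' haa'
        have hmem : a ∈ S.sort (· ≤ ·) :=
          (Finset.mem_sort _).2 (Finset.mem_filter.1 ha).1
        have hmem' : a' ∈ S.sort (· ≤ ·) :=
          (Finset.mem_sort _).2 (Finset.mem_filter.1 ha').1
        have h1 := List.idxOf_get (l := S.sort (· ≤ ·)) (a := a)
          (List.idxOf_lt_length_iff.2 hmem)
        have h2 := List.idxOf_get (l := S.sort (· ≤ ·)) (a := a')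
          (List.idxOf_lt_length_iff.2 hmem')
        rw [← h1, ← h2]
        exact congrArg _ (Fin.ext haa')
    omega

lemma sort_getD_rank {S : Finset (Fin n)} {m : ℕ} (hm : m < S.card) (d : Fin n) :
    (S.filter (· < (S.sort (· ≤ ·)).getD m d)).card = m := by
  set k' := (S.sort (· ≤ ·)).getD m d with hk'
  have h1 : ¬ m < (S.filter (· < k')).card := by
    rw [← sort_getD_lt_iff hm d]
    exact lt_irrefl _
  have h2 : ¬ (S.filter (· < k')).card < m := by
    intro hlt
    have hrc : (S.filter (· < k')).card < S.card := lt_trans hlt hm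
    have := sort_getD_strictMono hm hlt d
    rw [← hk'] at this
    have h3 := (sort_getD_lt_iff hrc d).1 this
    exact lt_irrefl _ h3
  omega

lemma sort_getD_le {S : Finset (Fin n)} {t : ℕ} (ht : t < S.card) {a : Fin n} (ha : a ∈ S)
    (d : Fin n) (h : ∀ m, m < t → (S.sort (· ≤ ·)).getD m d ≠ a) :
    (S.sort (· ≤ ·)).getD t d ≤ a := by
  have hmem : a ∈ S.sort (· ≤ ·) := (Finset.mem_sort _).2 ha
  have hidx : (S.sort (· ≤ ·)).idxOf a < (S.sort (· ≤ ·)).length :=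
    List.idxOf_lt_length_iff.2 hmem
  have hge : t ≤ (S.sort (· ≤ ·)).idxOf a := by
    by_contra hlt
    push_neg at hlt
    refine h _ hlt ?_
    rw [List.getD_eq_get _ _ ⟨_, hidx⟩, List.idxOf_get]
  have htl : t < (S.sort (· ≤ ·)).length := by rwa [Finset.length_sort]
  calc (S.sort (· ≤ ·)).getD t d = (S.sort (· ≤ ·)).get ⟨t, htl⟩ := List.getD_eq_get _ _ ⟨t, htl⟩
    _ ≤ (S.sort (· ≤ ·)).get ⟨_, hidx⟩ := (Finset.pairwise_sort _ _).rel_get_of_le (by exact hge)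
    _ = a := List.idxOf_get _

lemma sort_getD_default {S : Finset (Fin n)} {m : ℕ} (hm : m < S.card) (d d' : Fin n) :
    (S.sort (· ≤ ·)).getD m d = (S.sort (· ≤ ·)).getD m d' := by
  have hl : m < (S.sort (· ≤ ·)).length := by rwa [Finset.length_sort]
  rw [List.getD_eq_get _ _ ⟨m, hl⟩, List.getD_eq_get _ _ ⟨m, hl⟩]

end Aux

open VPart in
/-- if `x ⋖ y` is an edge (above `̄0`) with `A(x) ≠ A(y)` and
`(k, i, j)` is the lexicographically first triple with `wⁱₖ(x) ≠ wⁱₖ(y) = j`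
(here `p = (k, i)`), then `wⁱₖ(x) > wⁱₖ(y) = j`. -/
theorem statement10 (n s : ℕ) (x y : VPart n s) (hxy : x ⋖ y)
    (hA : atomWord x ≠ atomWord y) (p : Fin n × Fin s)
    (hp : atomWord x p.2 p.1 ≠ atomWord y p.2 p.1)
    (hmin : ∀ q : Fin n × Fin s, (q.1 < p.1 ∨ (q.1 = p.1 ∧ q.2 < p.2)) ->
      atomWord x q.2 q.1 = atomWord y q.2 q.1) :
    atomWord y p.2 p.1 < atomWord x p.2 p.1 := by
  obtain ⟨hP, hw⟩ : x ≤ y := hxy.1.le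
  set i := p.2 with hi
  set k := p.1 with hk
  set Bx := x.partOf k with hBxdef
  set By := y.partOf k with hBydef
  have hBxmem : Bx ∈ x.P.parts := x.P.part_mem.2 (Finset.mem_univ k)
  have hkBx : k ∈ Bx := x.P.mem_part (Finset.mem_univ k)
  have hBymem : By ∈ y.P.parts := y.P.part_mem.2 (Finset.mem_univ k)
  have hkBy : k ∈ By := y.P.mem_part (Finset.mem_univ k)
  obtain ⟨C, hC, hsub⟩ := hP hBxmem
  have hBxBy : Bx ⊆ By := by
    have hCeq : By = C := y.P.part_eq_of_mem hC (hsub hkBx)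
    rw [hCeq]; exact hsub
  set r := (Bx.filter (· < k)).card with hrdef
  set t := (By.filter (· < k)).card with htdef
  have hr : r < Bx.card := by
    apply Finset.card_lt_card
    refine ⟨Finset.filter_subset _ _, fun hss => ?_⟩
    have := hss hkBx
    simp at this
  have ht : t < By.card := by
    apply Finset.card_lt_card
    refine ⟨Finset.filter_subset _ _, fun hss => ?_⟩
    have := hss hkBy
    simp at this
  have hrw : r < (x.w i Bx).card := by rw [x.card_w i Bx hBxmem]; exact hr
  have htw : t < (y.w i By).card := by rw [y.card_w i By hBymem]; exact ht
  set a := atomWord x i k with hadef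
  have hax : a = ((x.w i Bx).sort (· ≤ ·)).getD r k := rfl
  have hay : atomWord y i k = ((y.w i By).sort (· ≤ ·)).getD t k := rfl
  have ha_mem : a ∈ x.w i Bx := by rw [hax]; exact sort_getD_mem hrw k
  have ha_y : a ∈ y.w i By := hw i Bx hBxmem By hBymem hBxBy ha_mem
  have hne : ∀ m, m < t → ((y.w i By).sort (· ≤ ·)).getD m k ≠ a := by
    intro m hm heq
    have hmBy : m < By.card := lt_trans hm ht
    have hmw : m < (y.w i By).card := by rw [y.card_w i By hBymem]; exact hmBy
    set k' := (By.sort (· ≤ ·)).getD m k with hk'def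
    have hk'By : k' ∈ By := sort_getD_mem hmBy k
    have hk'lt : k' < k := (sort_getD_lt_iff hmBy k).2 hm
    have hpartk' : y.partOf k' = By := y.P.part_eq_of_mem hBymem hk'By
    have hrank : (By.filter (· < k')).card = m := sort_getD_rank hmBy k
    have hAy : atomWord y i k' = ((y.w i By).sort (· ≤ ·)).getD m k := by
      show ((y.w i (y.partOf k')).sort (· ≤ ·)).getD (((y.partOf k').filter (· < k')).card) k'
        = ((y.w i By).sort (· ≤ ·)).getD m k
      rw [hpartk', hrank]
      exact sort_getD_default hmw k' k
    have hAx : atomWord x i k' = a := by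
      rw [hmin ⟨k', i⟩ (Or.inl hk'lt), hAy, heq]
    set Bx' := x.partOf k' with hBx'def
    have hBx'mem : Bx' ∈ x.P.parts := x.P.part_mem.2 (Finset.mem_univ k')
    have hk'Bx' : k' ∈ Bx' := x.P.mem_part (Finset.mem_univ k')
    set r' := (Bx'.filter (· < k')).card with hr'def
    have hr' : r' < Bx'.card := by
      apply Finset.card_lt_card
      refine ⟨Finset.filter_subset _ _, fun hss => ?_⟩
      have := hss hk'Bx'
      simp at this
    have hr'w : r' < (x.w i Bx').card := by rw [x.card_w i Bx' hBx'mem]; exact hr'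
    have hAx' : atomWord x i k' = ((x.w i Bx').sort (· ≤ ·)).getD r' k' := rfl
    by_cases hBB : Bx' = Bx
    · have hrr' : r' < r := by
        rw [hr'def, hrdef, hBB]
        apply Finset.card_lt_card
        constructor
        · intro z hz
          rw [Finset.mem_filter] at hz ⊢
          exact ⟨hz.1, lt_trans hz.2 hk'lt⟩
        · intro hss
          have : k' ∈ Bx.filter (· < k) := Finset.mem_filter.2 ⟨hBB ▸ hk'Bx', hk'lt⟩
          have := hss this
          simp at this
      have hr'wx : r' < (x.w i Bx).card := hBB ▸ hr'w
      have e1 : ((x.w i Bx).sort (· ≤ ·)).getD r' k = ((x.w i Bx).sort (· ≤ ·)).getD r k := by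
        rw [← hax, ← hAx, hAx', hBB]
        exact (sort_getD_default hr'wx k' k).symm
      have := sort_getD_inj hr'wx hrw k e1
      omega
    · obtain ⟨B₀, hB₀, huniq⟩ := x.part_w i a
      have hAx_mem : a ∈ x.w i Bx' := by
        rw [← hAx, hAx']
        exact sort_getD_mem hr'w k'
      have h1 : Bx = B₀ := huniq Bx ⟨hBxmem, ha_mem⟩
      have h2 : Bx' = B₀ := huniq Bx' ⟨hBx'mem, hAx_mem⟩
      exact hBB (h2.trans h1.symm)
  have hfin : atomWord y i k ≤ a := by
    rw [hay]
    exact sort_getD_le htw ha_y k hne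
  exact lt_of_le_of_ne hfin (Ne.symm hp)
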